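/- If f : X → X is statistically ward continuous on a subset E of a 2-normed space X, then f is statistically sequentially continuous on E. -/

import Mathlib

open Filter

/-- A 2-normed space: a real linear space with dim > 1 together with a 2-norm. -/
structure TwoNormedSpace (X : Type*) [AddCommGroup X] [Module ℝ X] : Type _ where
  toFun : X → X → ℝ
  one_lt_rank : 1 < Module.rank ℝ X
  eq_zero_iff : ∀ x y : X, toFun x y = 0 ↔ ¬ LinearIndependent ℝ ![x, y]
  symm : ∀ x y : X, toFun x y = toFun y x
  smul_left : ∀ (α : ℝ) (x y : X), toFun (α • x) y = |α| * toFun x y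
  add_right : ∀ x y z : X, toFun x (y + z) ≤ toFun x y + toFun x z

variable {X : Type*} [AddCommGroup X] [Module ℝ X]

/-- A sequence is statistically quasi-Cauchy w.r.t. a 2-norm `N`. -/
def StatQuasiCauchy (N : X → X → ℝ) (x : ℕ → X) : Prop :=
  ∀ ε > (0:ℝ), ∀ z : X, Tendsto
    (fun n => (((Finset.range n).filter (fun k => ε ≤ N (x (k+1) - x k) z)).card : ℝ) / n)
    atTop (nhds 0)

/-- A sequence statistically converges to `L` w.r.t. a 2-norm `N`. -/
def StatConv (N : X → X → ℝ) (x : ℕ → X) (L : X) : Prop :=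
  ∀ ε > (0:ℝ), ∀ z : X, Tendsto
    (fun n => (((Finset.range n).filter (fun k => ε ≤ N (x k - L) z)).card : ℝ) / n)
    atTop (nhds 0)

/-- A sequence converges to `L` w.r.t. a 2-norm `N`. -/
def ConvTo (N : X → X → ℝ) (x : ℕ → X) (L : X) : Prop :=
  ∀ z : X, Tendsto (fun n => N (x n - L) z) atTop (nhds 0)

/-- A sequence is quasi-Cauchy w.r.t. a 2-norm `N`. -/
def QuasiCauchy (N : X → X → ℝ) (x : ℕ → X) : Prop :=
  ∀ z : X, Tendsto (fun n => N (x (n+1) - x n) z) atTop (nhds 0)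

/-- A subset `E` is statistically ward compact w.r.t. a 2-norm `N`. -/
def StatWardCompact (N : X → X → ℝ) (E : Set X) : Prop :=
  ∀ x : ℕ → X, (∀ n, x n ∈ E) → ∃ φ : ℕ → ℕ, StrictMono φ ∧ StatQuasiCauchy N (x ∘ φ)

/-- `f` is statistically ward continuous on `E` w.r.t. a 2-norm `N`. -/
def StatWardContinuousOn (N : X → X → ℝ) (f : X → X) (E : Set X) : Prop :=
  ∀ x : ℕ → X, (∀ n, x n ∈ E) → StatQuasiCauchy N x → StatQuasiCauchy N (fun n => f (x n))

/-- The standard 2-norm on `ℝ²`: the area of the parallelogram spanned by `a` and `b`. -/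
def N2 : ℝ × ℝ → ℝ × ℝ → ℝ := fun a b => |a.1 * b.2 - a.2 * b.1|

theorem stmt15 {X : Type*} [AddCommGroup X] [Module ℝ X] (T : TwoNormedSpace X)
    (E : Set X) (f : X → X) (hf : StatWardContinuousOn T.toFun f E) :
    ∀ x₀ ∈ E, ∀ x : ℕ → X, (∀ n, x n ∈ E) → StatConv T.toFun x x₀ →
      StatConv T.toFun (fun n => f (x n)) (f x₀) := by
  classical
  intro x₀ hx₀ x hx hconv
  have hNneg : ∀ v z : X, T.toFun (-v) z = T.toFun v z := by
    intro v z
    have := T.smul_left (-1) v z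
    simpa using this
  set y : ℕ → X := fun n => if Even n then x (n / 2) else x₀ with hy
  have hyE : ∀ n, y n ∈ E := by
    intro n
    simp only [hy]
    split
    · exact hx _
    · exact hx₀
  -- Step 1: y is statistically quasi-Cauchy
  have hyQC : StatQuasiCauchy T.toFun y := by
    intro ε hε z
    have hB := hconv ε hε z
    set B : ℕ → ℕ := fun n =>
      ((Finset.range n).filter (fun k => ε ≤ T.toFun (x k - x₀) z)).card with hBdef
    set A : ℕ → ℕ := fun n =>
      ((Finset.range n).filter (fun k => ε ≤ T.toFun (y (k+1) - y k) z)).card with hAdef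
    have key : ∀ n, A n ≤ 2 * B n := by
      intro n
      set s := (Finset.range n).filter (fun k => ε ≤ T.toFun (y (k+1) - y k) z) with hs
      set t := (Finset.range n).filter (fun k => ε ≤ T.toFun (x k - x₀) z) with ht
      have hsplit : (s.filter (fun k => Even k)).card
          + (s.filter (fun k => ¬ Even k)).card = s.card :=
        Finset.card_filter_add_card_filter_not _
      have h1 : (s.filter (fun k => Even k)).card ≤ t.card := by
        apply Finset.card_le_card_of_injOn (fun k => k / 2)
        · intro k hk
          simp only [hs, Finset.mem_coe, Finset.mem_filter, Finset.mem_range] at hk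
          obtain ⟨⟨hkn, hkP⟩, hke⟩ := hk
          have hy1 : y k = x (k / 2) := if_pos hke
          have hy2 : y (k+1) = x₀ := if_neg (by simp [Nat.even_add_one, hke])
          rw [hy1, hy2] at hkP
          have : x₀ - x (k / 2) = -(x (k / 2) - x₀) := by abel
          rw [this, hNneg] at hkP
          simp only [ht, Finset.mem_coe, Finset.mem_filter, Finset.mem_range]
          exact ⟨by omega, hkP⟩
        · intro a ha b hb hab
          simp only [hs, Finset.mem_coe, Finset.mem_filter] at ha hb
          obtain ⟨c, hc⟩ := ha.2
          obtain ⟨d, hd⟩ := hb.2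
          simp only at hab
          omega
      have h2 : (s.filter (fun k => ¬ Even k)).card ≤ t.card := by
        apply Finset.card_le_card_of_injOn (fun k => (k + 1) / 2)
        · intro k hk
          simp only [hs, Finset.mem_coe, Finset.mem_filter, Finset.mem_range] at hk
          obtain ⟨⟨hkn, hkP⟩, hke⟩ := hk
          obtain ⟨c, hc⟩ := Nat.not_even_iff_odd.mp hke
          have hy1 : y k = x₀ := if_neg hke
          have hy2 : y (k+1) = x ((k+1) / 2) :=
            if_pos (by simp [Nat.even_add_one, hke])
          rw [hy1, hy2] at hkP
          simp only [ht, Finset.mem_coe, Finset.mem_filter, Finset.mem_range]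
          exact ⟨by omega, hkP⟩
        · intro a ha b hb hab
          simp only [hs, Finset.mem_coe, Finset.mem_filter] at ha hb
          obtain ⟨c, hc⟩ := Nat.not_even_iff_odd.mp ha.2
          obtain ⟨d, hd⟩ := Nat.not_even_iff_odd.mp hb.2
          simp only at hab
          omega
      calc A n = s.card := rfl
        _ = (s.filter (fun k => Even k)).card + (s.filter (fun k => ¬ Even k)).card :=
            hsplit.symm
        _ ≤ t.card + t.card := Nat.add_le_add h1 h2
        _ = 2 * B n := by rw [two_mul]
      -- done
    show Tendsto (fun n => (A n : ℝ) / n) atTop (nhds 0)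
    have hub : Tendsto (fun n => 2 * ((B n : ℝ) / n)) atTop (nhds 0) := by
      simpa using hB.const_mul 2
    apply tendsto_of_tendsto_of_tendsto_of_le_of_le tendsto_const_nhds hub
    · intro n
      positivity
    · intro n
      rcases Nat.eq_zero_or_pos n with h | h
      · subst h; simp
      · show (A n : ℝ) / n ≤ 2 * ((B n : ℝ) / n)
        rw [mul_div_assoc' (2:ℝ)]
        apply div_le_div_of_nonneg_right ?_ (by positivity)
        exact_mod_cast key n
  -- Step 2: f ∘ y statistically quasi-Cauchy ⇒ conclusion
  have hfyQC := hf y hyE hyQC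
  intro ε hε z
  have hD := hfyQC ε hε z
  set D : ℕ → ℕ := fun n =>
    ((Finset.range n).filter (fun k => ε ≤ T.toFun (f (y (k+1)) - f (y k)) z)).card with hDdef
  set C : ℕ → ℕ := fun n =>
    ((Finset.range n).filter (fun m => ε ≤ T.toFun (f (x m) - f x₀) z)).card with hCdef
  have key : ∀ n, C n ≤ D (2 * n) + 1 := by
    intro n
    set c := (Finset.range n).filter (fun m => ε ≤ T.toFun (f (x m) - f x₀) z) with hc
    set d := (Finset.range (2 * n)).filter
      (fun k => ε ≤ T.toFun (f (y (k+1)) - f (y k)) z) with hd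
    have herase : (c.erase 0).card ≤ d.card := by
      apply Finset.card_le_card_of_injOn (fun m => 2 * m - 1)
      · intro m hm
        simp only [hc, Finset.mem_coe, Finset.mem_erase, Finset.mem_filter, Finset.mem_range] at hm
        obtain ⟨hm0, hmn, hmP⟩ := hm
        have h1 : 2 * m - 1 + 1 = 2 * m := by omega
        have hy1 : y (2 * m - 1) = x₀ := if_neg (by
          intro hcon
          obtain ⟨r, hr⟩ := hcon
          omega)
        have hy2 : y (2 * m) = x m := by
          have : Even (2 * m) := ⟨m, by omega⟩
          simp only [hy, if_pos this]
          congr 1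
          omega
        simp only [hd, Finset.mem_coe, Finset.mem_filter, Finset.mem_range]
        constructor
        · omega
        · rw [h1, hy1, hy2]
          exact hmP
      · intro a ha b hb hab
        simp only at hab
        simp only [hc, Finset.mem_coe, Finset.mem_erase] at ha hb
        omega
    have hins : c.card ≤ (c.erase 0).card + 1 := by
      have hsub : c ⊆ insert 0 (c.erase 0) := by
        intro a ha
        by_cases h : a = 0
        · subst h; exact Finset.mem_insert_self _ _
        · exact Finset.mem_insert_of_mem (Finset.mem_erase.mpr ⟨h, ha⟩)
      calc c.card ≤ (insert 0 (c.erase 0)).card := Finset.card_le_card hsub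
        _ ≤ (c.erase 0).card + 1 := Finset.card_insert_le _ _
    calc C n = c.card := rfl
      _ ≤ (c.erase 0).card + 1 := hins
      _ ≤ d.card + 1 := by omega
      _ = D (2 * n) + 1 := rfl
  show Tendsto (fun n => (C n : ℝ) / n) atTop (nhds 0)
  have h2n : Tendsto (fun n : ℕ => 2 * n) atTop atTop :=
    tendsto_atTop_atTop.mpr (fun b => ⟨b, fun a ha => by omega⟩)
  have hDcomp : Tendsto (fun n => ((D (2 * n) : ℝ)) / (2 * n : ℕ)) atTop (nhds 0) :=
    hD.comp h2n
  have hub : Tendsto (fun n => 2 * ((D (2 * n) : ℝ) / ((2 * n : ℕ) : ℝ)) + 1 / (n : ℝ))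
      atTop (nhds 0) := by
    have := (hDcomp.const_mul 2).add tendsto_one_div_atTop_nhds_zero_nat
    simpa using this
  apply tendsto_of_tendsto_of_tendsto_of_le_of_le tendsto_const_nhds hub
  · intro n
    positivity
  · intro n
    rcases Nat.eq_zero_or_pos n with h | h
    · subst h; simp
    · have hn : (0:ℝ) < n := by exact_mod_cast h
      have h1 : 2 * ((D (2 * n) : ℝ) / ((2 * n : ℕ) : ℝ)) = (D (2 * n) : ℝ) / n := by
        push_cast
        field_simp
      show (C n : ℝ) / n ≤ 2 * ((D (2 * n) : ℝ) / ((2 * n : ℕ) : ℝ)) + 1 / (n : ℝ)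
      rw [h1, ← add_div, div_le_div_iff₀ hn hn]
      have : (C n : ℝ) ≤ (D (2 * n) : ℝ) + 1 := by exact_mod_cast key n
      nlinarith
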